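/- Let u be a profile of n voters' strict preference orders on a set A of p candidates (p ≥ 2). For a candidate a ∈ A, there exists a strict scoring s (i.e. s_0 < s_1 < … < s_{p-1}) such that a belongs to the de Borda winner set β_s(u) if and only if the score vector r(a) belongs to the Pareto boundary of the convex hull of the set R = {r(x) : x ∈ A} ⊆ ℝ^{p-1}. -/

import Mathlib

/-- The de Borda estimate of candidate `a` under scores `s` for profile `u`,
where `u i a : Fin p` is the 0-indexed rank of candidate `a` in the preference
of voter `i` (`0` = top place).  A candidate with 0-indexed rank `r` obtains
`s (p-1-r)` points, i.e. `B_s(a) = ∑_i s_{p - rank_i(a)}` with 1-indexed ranks. -/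
def bordaEstimate {n p : ℕ} (u : Fin n → Equiv.Perm (Fin p)) (s : Fin p → ℝ)
    (a : Fin p) : ℝ :=
  ∑ i : Fin n, s (Fin.rev (u i a))

/-- The score vector of candidate `a` : its `k`-th component (`k : Fin (p-1)`,
0-indexed) is the number of voters who place `a` within the top `k+1` places. -/
def scoreVec {n p : ℕ} (u : Fin n → Equiv.Perm (Fin p)) (a : Fin p) :
    Fin (p - 1) → ℝ :=
  fun k => ((Finset.univ : Finset (Fin n)).filter fun i => ((u i a : Fin p) : ℕ) ≤ (k : ℕ)).card

/-- `f'` belongs to the Pareto boundary of `F`. -/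
def ParetoOpt {m : ℕ} (F : Set (Fin m → ℝ)) (f' : Fin m → ℝ) : Prop :=
  f' ∈ F ∧ ¬ ∃ f ∈ F, (∀ j, f' j ≤ f j) ∧ ∃ j0, f' j0 < f j0

/-- `f''` belongs to the weak Pareto boundary of `F`. -/
def WeakParetoOpt {m : ℕ} (F : Set (Fin m → ℝ)) (f'' : Fin m → ℝ) : Prop :=
  f'' ∈ F ∧ ¬ ∃ f ∈ F, ∀ j, f'' j < f j


open Finset

/-! ### Cones generated by finite sets -/

/-- The conic hull (set of nonnegative combinations) of a finite set. -/
def coneOf {m : ℕ} (S : Finset (Fin m → ℝ)) : Set (Fin m → ℝ) :=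
  {v | ∃ l : (Fin m → ℝ) → ℝ, (∀ x ∈ S, 0 ≤ l x) ∧ v = ∑ x ∈ S, l x • x}

lemma zero_mem_coneOf {m : ℕ} (S : Finset (Fin m → ℝ)) : (0 : Fin m → ℝ) ∈ coneOf S :=
  ⟨0, fun _ _ => le_refl 0, by simp⟩

lemma coneOf_mono {m : ℕ} {T S : Finset (Fin m → ℝ)} (h : T ⊆ S) : coneOf T ⊆ coneOf S := by
  rintro v ⟨l, hl, rfl⟩
  classical
  refine ⟨fun x => if x ∈ T then l x else 0, fun x _ => ?_, ?_⟩
  · dsimp only; split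
    · exact hl _ ‹_›
    · exact le_refl 0
  · rw [← Finset.sum_subset h (fun x _ hx => by simp [hx])]
    exact Finset.sum_congr rfl fun x hx => by simp [hx]

lemma mem_coneOf_of_mem {m : ℕ} {S : Finset (Fin m → ℝ)} {x : Fin m → ℝ} (hx : x ∈ S) :
    x ∈ coneOf S := by
  classical
  refine ⟨fun y => if y = x then 1 else 0, fun y _ => by dsimp only; split <;> norm_num, ?_⟩
  have : ∀ y ∈ S, (fun y => if y = x then (1:ℝ) else 0) y • y = if y = x then y else 0 := by
    intro y _; dsimp only; split <;> simp
  rw [Finset.sum_congr rfl this, Finset.sum_ite_eq' S x (fun y => y), if_pos hx]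

lemma smul_mem_coneOf {m : ℕ} {S : Finset (Fin m → ℝ)} {v : Fin m → ℝ} {t : ℝ}
    (ht : 0 ≤ t) (hv : v ∈ coneOf S) : t • v ∈ coneOf S := by
  obtain ⟨l, hl, rfl⟩ := hv
  exact ⟨fun x => t * l x, fun x hx => mul_nonneg ht (hl x hx),
    by rw [Finset.smul_sum]; exact Finset.sum_congr rfl fun x _ => (smul_smul t (l x) x)⟩

lemma convex_coneOf {m : ℕ} (S : Finset (Fin m → ℝ)) : Convex ℝ (coneOf S) := by
  rintro v ⟨l, hl, rfl⟩ w ⟨l', hl', rfl⟩ a b ha hb _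
  refine ⟨fun x => a * l x + b * l' x, fun x hx =>
    add_nonneg (mul_nonneg ha (hl x hx)) (mul_nonneg hb (hl' x hx)), ?_⟩
  rw [Finset.smul_sum, Finset.smul_sum, ← Finset.sum_add_distrib]
  exact Finset.sum_congr rfl fun x _ => by
    rw [add_smul, smul_smul, smul_smul]

/-- Reduction step for conic Carathéodory. -/
lemma coneOf_erase {m : ℕ} (S : Finset (Fin m → ℝ)) (v : Fin m → ℝ)
    (l g : (Fin m → ℝ) → ℝ) (hl : ∀ x ∈ S, 0 ≤ l x) (hv : v = ∑ x ∈ S, l x • x)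
    (hg : ∑ x ∈ S, g x • x = 0) (x0 : Fin m → ℝ) (hx0S : x0 ∈ S) (hx0 : 0 < g x0) :
    ∃ y ∈ S, v ∈ coneOf (S.erase y) := by
  classical
  set P := S.filter (fun x => 0 < g x) with hP
  have hPne : P.Nonempty := ⟨x0, Finset.mem_filter.2 ⟨hx0S, hx0⟩⟩
  obtain ⟨y, hyP, hymin⟩ := Finset.exists_min_image P (fun x => l x / g x) hPne
  have hyS : y ∈ S := (Finset.mem_filter.1 hyP).1
  have hgy : 0 < g y := (Finset.mem_filter.1 hyP).2
  set t := l y / g y with ht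
  have ht0 : 0 ≤ t := div_nonneg (hl y hyS) hgy.le
  refine ⟨y, hyS, fun x => l x - t * g x, ?_, ?_⟩
  · intro x hx
    show 0 ≤ l x - t * g x
    have hxS : x ∈ S := Finset.mem_of_mem_erase hx
    rcases le_or_gt (g x) 0 with hgx | hgx
    · have : t * g x ≤ 0 := mul_nonpos_of_nonneg_of_nonpos ht0 hgx
      linarith [hl x hxS]
    · have := hymin x (Finset.mem_filter.2 ⟨hxS, hgx⟩)
      rw [ht, div_le_div_iff₀ hgy hgx] at this
      have htg : t * g x ≤ l x := by
        rw [ht, div_mul_eq_mul_div, div_le_iff₀ hgy]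
        nlinarith
      linarith
  · have hzero : (fun x => (l x - t * g x) • x) y = 0 := by
      show (l y - t * g y) • y = 0
      rw [ht, div_mul_cancel₀ _ hgy.ne', sub_self, zero_smul]
    show v = ∑ x ∈ S.erase y, (l x - t * g x) • x
    rw [Finset.sum_erase (f := fun x => (l x - t * g x) • x) S hzero]
    have : ∑ x ∈ S, (l x - t * g x) • x
        = (∑ x ∈ S, l x • x) - t • ∑ x ∈ S, g x • x := by
      rw [Finset.smul_sum, ← Finset.sum_sub_distrib]
      exact Finset.sum_congr rfl fun x _ => by rw [sub_smul, smul_smul]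
    rw [this, hg, smul_zero, sub_zero, hv]

/-- Conic Carathéodory: every point of the cone lies in the cone of a
linearly independent subset. -/
lemma coneOf_caratheodory {m : ℕ} (S : Finset (Fin m → ℝ)) :
    ∀ v ∈ coneOf S, ∃ T ⊆ S,
      LinearIndependent ℝ (fun x : T => (x : Fin m → ℝ)) ∧ v ∈ coneOf T := by
  classical
  induction S using Finset.strongInduction with
  | _ S ih =>
    intro v hv
    by_cases hli : LinearIndependent ℝ (fun x : S => (x : Fin m → ℝ))
    · exact ⟨S, Finset.Subset.refl S, hli, hv⟩
    · obtain ⟨g, hg, i0, hi0⟩ := Fintype.not_linearIndependent_iff.1 hli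
      set gbar : (Fin m → ℝ) → ℝ := fun x => if h : x ∈ S then g ⟨x, h⟩ else 0 with hgbar
      have hgbar_eq : ∀ i : S, gbar (i : Fin m → ℝ) = g i := by
        intro i; simp [hgbar, i.2]
      have hsum : ∑ x ∈ S, gbar x • x = 0 := by
        rw [← Finset.sum_attach S (fun x => gbar x • x), ← hg, ← Finset.univ_eq_attach]
        exact Finset.sum_congr rfl fun i _ => by rw [hgbar_eq]
      obtain ⟨l, hl, hveq⟩ := hv
      have key : ∃ y ∈ S, v ∈ coneOf (S.erase y) := by
        rcases lt_or_gt_of_ne hi0 with hneg | hpos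
        · refine coneOf_erase S v l (fun x => -gbar x) hl hveq ?_ (i0 : Fin m → ℝ)
            i0.2 ?_
          · simp only [neg_smul, Finset.sum_neg_distrib, hsum, neg_zero]
          · show 0 < -gbar (i0 : Fin m → ℝ)
            rw [hgbar_eq]; linarith
        · exact coneOf_erase S v l gbar hl hveq hsum (i0 : Fin m → ℝ) i0.2
            (by rw [hgbar_eq]; exact hpos)
      obtain ⟨y, hyS, hv'⟩ := key
      obtain ⟨T, hT, hTli, hvT⟩ := ih (S.erase y) (Finset.erase_ssubset hyS) v hv'
      exact ⟨T, hT.trans (Finset.erase_subset y S), hTli, hvT⟩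

/-- The cone of a linearly independent finite set is closed. -/
lemma isClosed_coneOf_of_linearIndependent {m : ℕ} (T : Finset (Fin m → ℝ))
    (hli : LinearIndependent ℝ (fun x : T => (x : Fin m → ℝ))) :
    IsClosed (coneOf T) := by
  classical
  set f : (T → ℝ) →ₗ[ℝ] (Fin m → ℝ) :=
    { toFun := fun l => ∑ i : T, l i • (i : Fin m → ℝ)
      map_add' := fun l l' => by
        simp [add_smul, Finset.sum_add_distrib]
      map_smul' := fun c l => by
        simp [smul_smul, Finset.smul_sum] } with hf
  have hinj : Function.Injective f := by
    intro l l' h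
    have h0 : f (l - l') = 0 := by rw [map_sub, h, sub_self]
    have : ∑ i : T, (l - l') i • (i : Fin m → ℝ) = 0 := h0
    have hz := Fintype.linearIndependent_iff.1 hli (l - l') this
    funext i
    have := hz i
    simpa [sub_eq_zero] using this
  have hemb := LinearMap.isClosedEmbedding_of_injective (f := f) (LinearMap.ker_eq_bot.2 hinj)
  have horth : IsClosed {l : T → ℝ | ∀ i, 0 ≤ l i} := by
    have : {l : T → ℝ | ∀ i, 0 ≤ l i} = ⋂ i, {l | 0 ≤ l i} := by
      ext l; simp [Set.mem_iInter]
    rw [this]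
    exact isClosed_iInter fun i => isClosed_le continuous_const (continuous_apply i)
  have himg : coneOf T = f '' {l : T → ℝ | ∀ i, 0 ≤ l i} := by
    ext v
    constructor
    · rintro ⟨l, hl, rfl⟩
      refine ⟨fun i => l (i : Fin m → ℝ), fun i => hl _ i.2, ?_⟩
      show ∑ i : T, l (i : Fin m → ℝ) • (i : Fin m → ℝ) = _
      rw [Finset.univ_eq_attach, Finset.sum_attach T (fun x => l x • x)]
    · rintro ⟨l, hl, rfl⟩
      refine ⟨fun x => if h : x ∈ T then l ⟨x, h⟩ else 0, fun x hx => by simpa [hx] using hl ⟨x, hx⟩, ?_⟩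
      show (∑ i : T, l i • (i : Fin m → ℝ)) = _
      rw [← Finset.sum_attach T (fun x => (if h : x ∈ T then l ⟨x, h⟩ else 0) • x),
        ← Finset.univ_eq_attach]
      exact Finset.sum_congr rfl fun i _ => by simp [i.2]
  rw [himg]
  exact hemb.isClosedMap _ horth

/-- Finitely generated cones are closed. -/
lemma isClosed_coneOf {m : ℕ} (S : Finset (Fin m → ℝ)) : IsClosed (coneOf S) := by
  classical
  have hunion : coneOf S = ⋃ T ∈ (S.powerset.filter
      (fun T => LinearIndependent ℝ (fun x : {x // x ∈ T} => (x : Fin m → ℝ)))), coneOf T := by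
    ext v
    simp only [Set.mem_iUnion, Finset.mem_filter, Finset.mem_powerset]
    constructor
    · intro hv
      obtain ⟨T, hT, hli, hvT⟩ := coneOf_caratheodory S v hv
      exact ⟨T, ⟨hT, hli⟩, hvT⟩
    · rintro ⟨T, ⟨hT, -⟩, hvT⟩
      exact coneOf_mono hT hvT
  rw [hunion]
  exact Set.Finite.isClosed_biUnion (Finset.finite_toSet _)
    (fun T hT => isClosed_coneOf_of_linearIndependent T
      (Finset.mem_filter.1 hT).2)

/-- Easy direction: strictly positive weights maximized at `ra` give Pareto optimality. -/
lemma pareto_of_weights {m : ℕ} (R : Finset (Fin m → ℝ)) (ra : Fin m → ℝ) (haR : ra ∈ R)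
    (c : Fin m → ℝ) (hc : ∀ j, 0 < c j)
    (hmax : ∀ x ∈ R, ∑ j, c j * x j ≤ ∑ j, c j * ra j) :
    ParetoOpt (convexHull ℝ (R : Set (Fin m → ℝ))) ra := by
  constructor
  · exact subset_convexHull ℝ _ haR
  · rintro ⟨f, hf, hge, j0, hj0⟩
    have hlin : IsLinearMap ℝ (fun w : Fin m → ℝ => ∑ j, c j * w j) := by
      constructor
      · intro w w'; simp [mul_add, Finset.sum_add_distrib]
      · intro t w; simp [Finset.mul_sum, mul_left_comm, mul_comm, mul_assoc]
    have hhalf : convexHull ℝ (R : Set (Fin m → ℝ)) ⊆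
        {w | ∑ j, c j * w j ≤ ∑ j, c j * ra j} :=
      convexHull_min hmax (convex_halfSpace_le hlin _)
    have hle : ∑ j, c j * f j ≤ ∑ j, c j * ra j := hhalf hf
    have hlt : ∑ j, c j * ra j < ∑ j, c j * f j := by
      refine Finset.sum_lt_sum (fun j _ => ?_) ⟨j0, Finset.mem_univ j0, ?_⟩
      · exact mul_le_mul_of_nonneg_left (hge j) (hc j).le
      · exact mul_lt_mul_of_pos_left hj0 (hc j0)
    linarith

/-- Hard direction: Pareto optimality yields strictly positive maximizing weights. -/
lemma weights_of_pareto {m : ℕ} (R : Finset (Fin m → ℝ)) (ra : Fin m → ℝ) (haR : ra ∈ R)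
    (hpar : ParetoOpt (convexHull ℝ (R : Set (Fin m → ℝ))) ra) :
    ∃ c : Fin m → ℝ, (∀ j, 0 < c j) ∧ ∀ x ∈ R, ∑ j, c j * x j ≤ ∑ j, c j * ra j := by
  classical
  set S : Finset (Fin m → ℝ) := R.image (fun x => x - ra) with hS
  -- the cone is disjoint from the standard simplex
  have hdisj : Disjoint (stdSimplex ℝ (Fin m)) (coneOf S) := by
    rw [Set.disjoint_left]
    rintro y ⟨hy0, hy1⟩ ⟨l, hl, rfl⟩
    set y := ∑ x ∈ S, l x • x
    set L := ∑ x ∈ S, l x with hL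
    have hL0 : 0 ≤ L := Finset.sum_nonneg hl
    rcases eq_or_lt_of_le hL0 with hLeq | hLpos
    · have : ∀ x ∈ S, l x = 0 := by
        intro x hx
        exact (Finset.sum_eq_zero_iff_of_nonneg hl).1 hLeq.symm x hx
      have hy0' : y = 0 := Finset.sum_eq_zero fun x hx => by rw [this x hx, zero_smul]
      rw [hy0'] at hy1
      simp at hy1
    · -- build a dominating point of the hull
      set z := ∑ x ∈ S, (l x / L) • (x + ra) with hz
      have hzhull : z ∈ convexHull ℝ (R : Set (Fin m → ℝ)) := by
        refine (convex_convexHull ℝ _).sum_mem (fun x _ => div_nonneg (hl x ‹_›) hL0) ?_ ?_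
        · rw [← Finset.sum_div, div_self hLpos.ne']
        · intro x hx
          obtain ⟨b, hb, rfl⟩ := Finset.mem_image.1 (hS ▸ hx)
          rw [sub_add_cancel]
          exact subset_convexHull ℝ _ hb
      have hzeq : z = ra + L⁻¹ • y := by
        rw [hz]
        have : ∀ x ∈ S, (l x / L) • (x + ra) = (l x / L) • x + (l x / L) • ra := fun x _ =>
          smul_add _ _ _
        rw [Finset.sum_congr rfl this, Finset.sum_add_distrib, ← Finset.sum_smul,
          ← Finset.sum_div, ← hL, div_self hLpos.ne', one_smul]
        have : ∑ x ∈ S, (l x / L) • x = L⁻¹ • y := by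
          rw [Finset.smul_sum]
          exact Finset.sum_congr rfl fun x _ => by
            rw [smul_smul, div_eq_inv_mul]
        rw [this, add_comm]
      obtain ⟨j1, hj1⟩ : ∃ j, 0 < y j := by
        by_contra hcon
        push_neg at hcon
        have : ∑ j, y j ≤ 0 := Finset.sum_nonpos fun j _ => hcon j
        rw [hy1] at this; linarith
      refine hpar.2 ⟨z, hzhull, fun j => ?_, j1, ?_⟩
      · rw [hzeq]
        have h1 : 0 ≤ L⁻¹ * y j := mul_nonneg (inv_nonneg.2 hL0) (hy0 j)
        have h2 : (ra + L⁻¹ • y) j = ra j + L⁻¹ * y j := by simp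
        rw [h2]; linarith
      · rw [hzeq]
        have h1 : 0 < L⁻¹ * y j1 := mul_pos (inv_pos.2 hLpos) hj1
        have h2 : (ra + L⁻¹ • y) j1 = ra j1 + L⁻¹ * y j1 := by simp
        rw [h2]; linarith
  -- separate
  obtain ⟨φ, uu, vv, hsimp, huv, hcone⟩ := geometric_hahn_banach_compact_closed
    (convex_stdSimplex ℝ (Fin m)) (isCompact_stdSimplex ℝ (Fin m))
    (convex_coneOf S) (isClosed_coneOf S) hdisj
  have hv0 : vv < 0 := by
    have := hcone 0 (zero_mem_coneOf S)
    simpa using this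
  -- φ is nonnegative on the cone
  have hφK : ∀ k ∈ coneOf S, 0 ≤ φ k := by
    intro k hk
    by_contra hneg
    push_neg at hneg
    set τ : ℝ := vv / φ k + 1 with hτ
    have hτ0 : 0 ≤ τ := by
      have hd : 0 < vv / φ k := div_pos_of_neg_of_neg hv0 hneg
      rw [hτ]; linarith
    have := hcone (τ • k) (smul_mem_coneOf hτ0 hk)
    rw [map_smul, smul_eq_mul, hτ, add_mul, div_mul_cancel₀ _ hneg.ne] at this
    linarith
  refine ⟨fun j => -φ (Pi.single j 1), fun j => ?_, ?_⟩
  · show 0 < -φ (Pi.single j 1)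
    have h1 := hsimp _ (single_mem_stdSimplex ℝ j)
    have h2 : φ (Pi.single j 1) < 0 := by linarith
    linarith
  · intro x hx
    have hxS : x - ra ∈ coneOf S :=
      mem_coneOf_of_mem (Finset.mem_image_of_mem _ hx)
    have hφx : 0 ≤ φ (x - ra) := hφK _ hxS
    have hexp : ∀ w : Fin m → ℝ, φ w = ∑ j, w j * φ (Pi.single j 1) := by
      intro w
      conv_lhs => rw [pi_eq_sum_univ w]
      rw [map_sum]
      refine Finset.sum_congr rfl fun j _ => ?_
      have hfun : (fun i => if j = i then (1:ℝ) else 0) = Pi.single j 1 := by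
        funext i; simp [Pi.single_apply, eq_comm]
      rw [map_smul, smul_eq_mul, hfun]
    have : φ (x - ra) = (∑ j, x j * φ (Pi.single j 1)) - ∑ j, ra j * φ (Pi.single j 1) := by
      rw [hexp, ← Finset.sum_sub_distrib]
      exact Finset.sum_congr rfl fun j _ => by rw [Pi.sub_apply, sub_mul]
    have hle : ∑ j, ra j * φ (Pi.single j 1) ≤ ∑ j, x j * φ (Pi.single j 1) := by linarith
    calc ∑ j, -φ (Pi.single j 1) * x j = -∑ j, x j * φ (Pi.single j 1) := by
          rw [← Finset.sum_neg_distrib]; exact Finset.sum_congr rfl fun j _ => by ring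
      _ ≤ -∑ j, ra j * φ (Pi.single j 1) := by linarith
      _ = ∑ j, -φ (Pi.single j 1) * ra j := by
          rw [← Finset.sum_neg_distrib]; exact Finset.sum_congr rfl fun j _ => by ring

/-- Auxiliary: scores as a function on `ℕ`. -/
def gfun {p : ℕ} (s : Fin p → ℝ) : ℕ → ℝ := fun i => if h : i < p then s ⟨i, h⟩ else 0

/-- The `k`-th "jump" of the scoring, matched to threshold `k`. -/
def jump {p : ℕ} (s : Fin p → ℝ) (k : Fin (p - 1)) : ℝ :=
  gfun s (p - 1 - k) - gfun s (p - 2 - k)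

/-- Telescoping: the score of place `r` (from the bottom). -/
lemma gfun_telescope {p : ℕ} (s : Fin p → ℝ) (r : ℕ) (hr : r < p) :
    gfun s (p - 1 - r) = gfun s 0 +
      ∑ k ∈ Finset.range (p - 1), (if r ≤ k then gfun s (p - 1 - k) - gfun s (p - 2 - k) else 0) := by
  have h1 : ∑ k ∈ Finset.range (p - 1), (if r ≤ k then gfun s (p-1-k) - gfun s (p-2-k) else 0)
      = ∑ k ∈ Finset.Ico r (p - 1), (gfun s (p-1-k) - gfun s (p-2-k)) := by
    rw [← Finset.sum_filter]
    congr 1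
    ext k
    simp [Finset.mem_filter, Finset.mem_Ico, Finset.mem_range, and_comm]
  rw [h1, Finset.sum_Ico_eq_sum_range]
  set N := p - 1 - r with hN
  have h2 : ∑ j ∈ Finset.range (p - 1 - r), (gfun s (p-1-(r+j)) - gfun s (p-2-(r+j)))
      = ∑ j ∈ Finset.range N, (gfun s (N - j) - gfun s (N - 1 - j)) := by
    refine Finset.sum_congr rfl fun j hj => ?_
    have hjN : j < N := by rwa [Finset.mem_range] at hj
    congr 2 <;> omega
  have h3 : ∑ j ∈ Finset.range N, (gfun s (N - j) - gfun s (N - 1 - j))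
      = ∑ j ∈ Finset.range N, ((fun i => gfun s (i + 1)) (N - 1 - j) - (fun i => gfun s i) (N - 1 - j)) := by
    refine Finset.sum_congr rfl fun j hj => ?_
    have hjN : j < N := by rwa [Finset.mem_range] at hj
    show _ = gfun s (N - 1 - j + 1) - gfun s (N - 1 - j)
    congr 2 <;> omega
  have h4 : ∑ j ∈ Finset.range N, (gfun s (N - 1 - j + 1) - gfun s (N - 1 - j))
      = ∑ j ∈ Finset.range N, (gfun s (j + 1) - gfun s j) :=
    Finset.sum_range_reflect (fun j => gfun s (j + 1) - gfun s j) N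
  rw [h2, h3]
  show gfun s (p - 1 - r) = gfun s 0 + ∑ j ∈ Finset.range N, (gfun s (N - 1 - j + 1) - gfun s (N - 1 - j))
  rw [h4, Finset.sum_range_sub (fun j => gfun s j) N]
  ring_nf
  rfl

/-- Decomposition of the Borda estimate as an affine function of the score vector. -/
lemma borda_decomp {n p : ℕ} (hp : 2 ≤ p) (u : Fin n → Equiv.Perm (Fin p))
    (s : Fin p → ℝ) (b : Fin p) :
    bordaEstimate u s b = n * gfun s 0 + ∑ k : Fin (p - 1), jump s k * scoreVec u b k := by
  have hvoter : ∀ i : Fin n, s (Fin.rev (u i b)) = gfun s 0 +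
      ∑ k : Fin (p - 1), (if ((u i b : Fin p) : ℕ) ≤ (k : ℕ) then jump s k else 0) := by
    intro i
    have h0 : s (Fin.rev (u i b)) = gfun s (p - 1 - ((u i b : Fin p) : ℕ)) := by
      rw [gfun]
      have hlt : p - 1 - ((u i b : Fin p) : ℕ) < p := by
        have := (u i b).isLt; omega
      rw [dif_pos hlt]
      congr 1
      apply Fin.ext
      rw [Fin.val_rev]
      show p - (((u i b : Fin p) : ℕ) + 1) = p - 1 - ((u i b : Fin p) : ℕ)
      omega
    rw [h0, gfun_telescope s _ (u i b).isLt]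
    congr 1
    rw [← Fin.sum_univ_eq_sum_range
      (fun k => if ((u i b : Fin p) : ℕ) ≤ k then gfun s (p-1-k) - gfun s (p-2-k) else 0) (p-1)]
    rfl
  rw [bordaEstimate, Finset.sum_congr rfl (fun i _ => hvoter i), Finset.sum_add_distrib,
    Finset.sum_const, Finset.card_univ, Fintype.card_fin, nsmul_eq_mul, Finset.sum_comm]
  congr 1
  refine Finset.sum_congr rfl fun k _ => ?_
  rw [← Finset.sum_filter, Finset.sum_const, nsmul_eq_mul, mul_comm, scoreVec]

/-- Strict scorings correspond to strictly positive weight vectors. -/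
lemma exists_strict_iff_exists_pos {n p : ℕ} (hp : 2 ≤ p) (u : Fin n → Equiv.Perm (Fin p))
    (a : Fin p) :
    (∃ s : Fin p → ℝ, StrictMono s ∧
        ∀ b : Fin p, bordaEstimate u s b ≤ bordaEstimate u s a) ↔
      ∃ c : Fin (p - 1) → ℝ, (∀ k, 0 < c k) ∧
        ∀ b : Fin p, ∑ k, c k * scoreVec u b k ≤ ∑ k, c k * scoreVec u a k := by
  constructor
  · rintro ⟨s, hs, hmax⟩
    refine ⟨jump s, fun k => ?_, fun b => ?_⟩
    · have hk := k.isLt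
      rw [jump, gfun, gfun, dif_pos (show p - 1 - (k:ℕ) < p by omega),
        dif_pos (show p - 2 - (k:ℕ) < p by omega)]
      have : (⟨p - 2 - (k:ℕ), by omega⟩ : Fin p) < ⟨p - 1 - (k:ℕ), by omega⟩ := by
        rw [Fin.lt_def]; show p - 2 - (k:ℕ) < p - 1 - (k:ℕ); omega
      exact sub_pos.2 (hs this)
    · have hb := hmax b
      rw [borda_decomp hp u s b, borda_decomp hp u s a] at hb
      have h1 : ∀ x : Fin p, ∑ k : Fin (p-1), jump s k * scoreVec u x k
          = ∑ k : Fin (p-1), jump s k * scoreVec u x k := fun _ => rfl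
      linarith
  · rintro ⟨c, hc, hmax⟩
    refine ⟨fun j => ∑ i ∈ Finset.range (j : ℕ), c ⟨p - 2 - i, by omega⟩, ?_, ?_⟩
    · intro j j' hjj'
      have hv : (j : ℕ) < (j' : ℕ) := hjj'
      refine Finset.sum_lt_sum_of_subset
        (Finset.range_subset_range.2 hv.le) (Finset.mem_range.2 hv) (Finset.notMem_range_self)
        (hc _) (fun i _ _ => (hc _).le)
    · set s : Fin p → ℝ := fun j => ∑ i ∈ Finset.range (j : ℕ), c ⟨p - 2 - i, by omega⟩
        with hsdef
      have hjump : ∀ k : Fin (p - 1), jump s k = c k := by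
        intro k
        have hk := k.isLt
        rw [jump, gfun, gfun, dif_pos (show p - 1 - (k:ℕ) < p by omega),
          dif_pos (show p - 2 - (k:ℕ) < p by omega), hsdef]
        show (∑ i ∈ Finset.range ((⟨p - 1 - (k:ℕ), _⟩ : Fin p) : ℕ), c ⟨p - 2 - i, _⟩)
          - (∑ i ∈ Finset.range ((⟨p - 2 - (k:ℕ), _⟩ : Fin p) : ℕ), c ⟨p - 2 - i, _⟩) = c k
        have hv1 : ((⟨p - 1 - (k:ℕ), by omega⟩ : Fin p) : ℕ) = (p - 2 - (k:ℕ)) + 1 := by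
          show p - 1 - (k:ℕ) = (p - 2 - (k:ℕ)) + 1; omega
        have hv2 : ((⟨p - 2 - (k:ℕ), by omega⟩ : Fin p) : ℕ) = p - 2 - (k:ℕ) := rfl
        rw [hv1, hv2, Finset.sum_range_succ, add_sub_cancel_left]
        congr 1
        apply Fin.ext
        show p - 2 - (p - 2 - (k:ℕ)) = (k:ℕ)
        omega
      intro b
      rw [borda_decomp hp u s b, borda_decomp hp u s a]
      have h1 : ∀ x : Fin p, ∑ k : Fin (p-1), jump s k * scoreVec u x k
          = ∑ k : Fin (p-1), c k * scoreVec u x k :=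
        fun x => Finset.sum_congr rfl fun k _ => by rw [hjump k]
      rw [h1 b, h1 a]
      linarith [hmax b]

/-- There exists a strict scoring `s` (i.e. `s_0 < s_1 < ... < s_{p-1}`) making
candidate `a` a de Borda winner if and only if the score vector `r(a)` belongs
to the Pareto boundary of the convex hull of the set `R` of all score vectors. -/
theorem eligibility_strict_iff {n p : ℕ} (hn : 1 ≤ n) (hp : 2 ≤ p)
    (u : Fin n → Equiv.Perm (Fin p)) (a : Fin p) :
    (∃ s : Fin p → ℝ, StrictMono s ∧
        ∀ b : Fin p, bordaEstimate u s b ≤ bordaEstimate u s a) ↔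
      ParetoOpt (convexHull ℝ (Set.range (scoreVec u))) (scoreVec u a) := by
  classical
  set R : Finset (Fin (p - 1) → ℝ) := Finset.image (scoreVec u) Finset.univ with hR
  have hrange : Set.range (scoreVec u) = (R : Set (Fin (p - 1) → ℝ)) := by
    rw [hR, Finset.coe_image, Finset.coe_univ, Set.image_univ]
  have haR : scoreVec u a ∈ R := Finset.mem_image_of_mem _ (Finset.mem_univ a)
  rw [hrange, exists_strict_iff_exists_pos hp u a]
  constructor
  · rintro ⟨c, hc, hmax⟩
    refine pareto_of_weights R (scoreVec u a) haR c hc ?_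
    intro x hx
    obtain ⟨b, -, rfl⟩ := Finset.mem_image.1 hx
    exact hmax b
  · intro hpar
    obtain ⟨c, hc, hmax⟩ := weights_of_pareto R (scoreVec u a) haR hpar
    exact ⟨c, hc, fun b => hmax _ (Finset.mem_image_of_mem _ (Finset.mem_univ b))⟩
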